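/- Let v lie in the closed ball of radius R centered at v*, write Δ = ‖v − v*‖ and J = J(v), and suppose J is invertible. Let E be a continuous linear operator on ℂⁿ with ‖J⁻¹‖·‖E‖ < 1, let e ∈ ℂⁿ, and let d ∈ ℂⁿ satisfy (J + E)d = −(F(v) + e). Then ‖v − v* + d‖ ≤ K·‖J⁻¹‖·(‖E‖·Δ + (α + β)·Δ² + ‖e‖), where K = 1/(1 − ‖J⁻¹‖·‖E‖). -/

import Mathlib

/-- With `Δ = ‖v - v*‖`, `J = fderiv ℂ F v` invertible (inverse `Jinv`), `‖J⁻¹‖ ‖E‖ < 1`,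
and `(J + E) d = -(F v + e)`, one has
`‖v - v* + d‖ ≤ K ‖J⁻¹‖ (‖E‖ Δ + (α + β) Δ² + ‖e‖)` where `K = 1/(1 - ‖J⁻¹‖ ‖E‖)`. -/
theorem newton_step_error_bound {n : ℕ}
    (F : EuclideanSpace ℂ (Fin n) → EuclideanSpace ℂ (Fin n))
    (hF : ContDiff ℂ 2 F)
    (vstar : EuclideanSpace ℂ (Fin n)) (hvstar : F vstar = 0)
    (R α β : ℝ) (hR : 0 < R) (hα : 0 < α) (hβ : 0 < β)
    (halpha1 : ∀ z : EuclideanSpace ℂ (Fin n), ‖z - vstar‖ ≤ R →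
      ‖F z‖ ≤ ‖fderiv ℂ F vstar‖ * ‖z - vstar‖ + α * ‖z - vstar‖ ^ 2)
    (halpha2 : ∀ z : EuclideanSpace ℂ (Fin n), ‖z - vstar‖ ≤ R →
      ‖F z - fderiv ℂ F vstar (z - vstar)‖ ≤ α * ‖z - vstar‖ ^ 2)
    (hbeta1 : ∀ z : EuclideanSpace ℂ (Fin n), ‖z - vstar‖ ≤ R →
      ‖fderiv ℂ F vstar‖ ≤ ‖fderiv ℂ F z‖ + β * ‖z - vstar‖)
    (hbeta2 : ∀ z : EuclideanSpace ℂ (Fin n), ‖z - vstar‖ ≤ R →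
      ‖fderiv ℂ F z - fderiv ℂ F vstar‖ ≤ β * ‖z - vstar‖)
    (v : EuclideanSpace ℂ (Fin n)) (hv : ‖v - vstar‖ ≤ R)
    (Jinv : EuclideanSpace ℂ (Fin n) →L[ℂ] EuclideanSpace ℂ (Fin n))
    (hJ1 : fderiv ℂ F v * Jinv = 1) (hJ2 : Jinv * fderiv ℂ F v = 1)
    (E : EuclideanSpace ℂ (Fin n) →L[ℂ] EuclideanSpace ℂ (Fin n))
    (hJE : ‖Jinv‖ * ‖E‖ < 1)
    (e d : EuclideanSpace ℂ (Fin n))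
    (hd : (fderiv ℂ F v + E) d = -(F v + e)) :
    ‖v - vstar + d‖ ≤ (1 / (1 - ‖Jinv‖ * ‖E‖)) * ‖Jinv‖ *
      (‖E‖ * ‖v - vstar‖ + (α + β) * ‖v - vstar‖ ^ 2 + ‖e‖) := by
  set J := fderiv ℂ F v with hJdef
  set Jst := fderiv ℂ F vstar with hJstdef
  have hd' : J d = -(F v + e) - E d := by
    have h : J d + E d = -(F v + e) := by
      simpa [ContinuousLinearMap.add_apply] using hd
    linear_combination (norm := module) h
  have hid : ∀ y, Jinv (J y) = y := fun y => by
    have := congrArg (fun T : EuclideanSpace ℂ (Fin n) →L[ℂ] EuclideanSpace ℂ (Fin n) => T y) hJ2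
    simpa [ContinuousLinearMap.mul_apply] using this
  have h1 : J (v - vstar + d)
      = (J - Jst) (v - vstar) - (F v - Jst (v - vstar)) - e - E d := by
    simp only [map_add, ContinuousLinearMap.sub_apply, hd']
    abel
  have key : v - vstar + d
      = Jinv ((J - Jst) (v - vstar) - (F v - Jst (v - vstar)) - e - E d) := by
    rw [← h1, hid]
  have hb : ‖J - Jst‖ ≤ β * ‖v - vstar‖ := hbeta2 v hv
  have ha : ‖F v - Jst (v - vstar)‖ ≤ α * ‖v - vstar‖ ^ 2 := halpha2 v hv
  have hdn : ‖d‖ ≤ ‖v - vstar + d‖ + ‖v - vstar‖ := by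
    have h := norm_sub_le (v - vstar + d) (v - vstar)
    have h2 : (v - vstar + d) - (v - vstar) = d := by abel
    rwa [h2] at h
  have hAn : ‖(J - Jst) (v - vstar)‖ ≤ β * ‖v - vstar‖ ^ 2 := by
    calc ‖(J - Jst) (v - vstar)‖ ≤ ‖J - Jst‖ * ‖v - vstar‖ :=
          ContinuousLinearMap.le_opNorm _ _
      _ ≤ (β * ‖v - vstar‖) * ‖v - vstar‖ :=
          mul_le_mul_of_nonneg_right hb (norm_nonneg _)
      _ = β * ‖v - vstar‖ ^ 2 := by ring
  have hEd : ‖E d‖ ≤ ‖E‖ * (‖v - vstar + d‖ + ‖v - vstar‖) := by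
    calc ‖E d‖ ≤ ‖E‖ * ‖d‖ := ContinuousLinearMap.le_opNorm _ _
      _ ≤ ‖E‖ * (‖v - vstar + d‖ + ‖v - vstar‖) :=
          mul_le_mul_of_nonneg_left hdn (norm_nonneg _)
  have hinner : ‖(J - Jst) (v - vstar) - (F v - Jst (v - vstar)) - e - E d‖
      ≤ β * ‖v - vstar‖ ^ 2 + α * ‖v - vstar‖ ^ 2 + ‖e‖
        + ‖E‖ * (‖v - vstar + d‖ + ‖v - vstar‖) := by
    calc ‖(J - Jst) (v - vstar) - (F v - Jst (v - vstar)) - e - E d‖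
        ≤ ‖(J - Jst) (v - vstar) - (F v - Jst (v - vstar)) - e‖ + ‖E d‖ :=
          norm_sub_le _ _
      _ ≤ ‖(J - Jst) (v - vstar) - (F v - Jst (v - vstar))‖ + ‖e‖ + ‖E d‖ :=
          add_le_add (norm_sub_le _ _) le_rfl
      _ ≤ ‖(J - Jst) (v - vstar)‖ + ‖F v - Jst (v - vstar)‖ + ‖e‖ + ‖E d‖ :=
          add_le_add (add_le_add (norm_sub_le _ _) le_rfl) le_rfl
      _ ≤ β * ‖v - vstar‖ ^ 2 + α * ‖v - vstar‖ ^ 2 + ‖e‖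
          + ‖E‖ * (‖v - vstar + d‖ + ‖v - vstar‖) := by gcongr
  have hmain : ‖v - vstar + d‖ ≤ ‖Jinv‖ * (β * ‖v - vstar‖ ^ 2 + α * ‖v - vstar‖ ^ 2 + ‖e‖
      + ‖E‖ * (‖v - vstar + d‖ + ‖v - vstar‖)) := by
    calc ‖v - vstar + d‖
        = ‖Jinv ((J - Jst) (v - vstar) - (F v - Jst (v - vstar)) - e - E d)‖ := by rw [← key]
      _ ≤ ‖Jinv‖ * ‖(J - Jst) (v - vstar) - (F v - Jst (v - vstar)) - e - E d‖ :=
          ContinuousLinearMap.le_opNorm _ _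
      _ ≤ _ := mul_le_mul_of_nonneg_left hinner (norm_nonneg _)
  have h1c : 0 < 1 - ‖Jinv‖ * ‖E‖ := by linarith
  have hq : (1 / (1 - ‖Jinv‖ * ‖E‖)) * ‖Jinv‖ *
      (‖E‖ * ‖v - vstar‖ + (α + β) * ‖v - vstar‖ ^ 2 + ‖e‖)
      = (‖Jinv‖ * (‖E‖ * ‖v - vstar‖ + (α + β) * ‖v - vstar‖ ^ 2 + ‖e‖))
        / (1 - ‖Jinv‖ * ‖E‖) := by ring
  rw [hq, le_div_iff₀ h1c]
  nlinarith [hmain, norm_nonneg (v - vstar + d)]
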